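/- Let G be a P5-free graph in which no longest cycle is dominating, and let C be a longest cycle of G (with a fixed orientation) chosen to minimize first the maximum component order μ(C) of G − C and then the number ω(C) of components achieving it; let H be a component of G − C with |H| = μ(C) ≥ 2. Then no vertex v of C with a neighbor in H satisfies that v⁺² also has a neighbor in H; that is, N_G(H; C) ∩ N_G(H; C)⁻² = ∅. -/

import Mathlib

open SimpleGraph

variable {V : Type*} [Fintype V] [DecidableEq V]

/-- `p 0, p 1, ..., p (n-1)` is a path of order `n` in `G`. -/
def IsPathOn (G : SimpleGraph V) (n : ℕ) (p : ℕ → V) : Prop :=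
  (∀ i j, i < n → j < n → p i = p j → i = j) ∧
  (∀ i, i + 1 < n → G.Adj (p i) (p (i + 1)))

/-- An induced path of order `n` in `G`. -/
def IsInducedPathOn (G : SimpleGraph V) (n : ℕ) (p : ℕ → V) : Prop :=
  IsPathOn G n p ∧ ∀ i j, i < n → j < n → G.Adj (p i) (p j) → (i + 1 = j ∨ j + 1 = i)

/-- `G` contains no induced path on 5 vertices. -/
def P5Free (G : SimpleGraph V) : Prop := ¬ ∃ p : ℕ → V, IsInducedPathOn G 5 p

/-- `G` contains no induced `K₄` minus an edge. -/
def K4mFree (G : SimpleGraph V) : Prop :=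
  ¬ ∃ a b c d : V, a ≠ b ∧ a ≠ c ∧ a ≠ d ∧ b ≠ c ∧ b ≠ d ∧ c ≠ d ∧
    G.Adj a b ∧ G.Adj a c ∧ G.Adj a d ∧ G.Adj b c ∧ G.Adj b d ∧ ¬ G.Adj c d

/-- `G` contains no induced `W*` (two triangles `abc`, `def` joined by the edge `cd`). -/
def WStarFree (G : SimpleGraph V) : Prop :=
  ¬ ∃ a b c d e f : V, List.Nodup [a, b, c, d, e, f] ∧
    G.Adj a b ∧ G.Adj b c ∧ G.Adj a c ∧ G.Adj d e ∧ G.Adj e f ∧ G.Adj d f ∧ G.Adj c d ∧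
    ¬ G.Adj a d ∧ ¬ G.Adj a e ∧ ¬ G.Adj a f ∧
    ¬ G.Adj b d ∧ ¬ G.Adj b e ∧ ¬ G.Adj b f ∧ ¬ G.Adj c e ∧ ¬ G.Adj c f

/-- `G` contains no induced paw (triangle `abc` with pendant edge `cd`). -/
def Z1Free (G : SimpleGraph V) : Prop :=
  ¬ ∃ a b c d : V, List.Nodup [a, b, c, d] ∧
    G.Adj a b ∧ G.Adj b c ∧ G.Adj a c ∧ G.Adj c d ∧ ¬ G.Adj a d ∧ ¬ G.Adj b d

/-- An (oriented) cycle of length `n` in `G`, as an injective map `ZMod n → V`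
with consecutive vertices adjacent. -/
def IsCycleOn (G : SimpleGraph V) (n : ℕ) (c : ZMod n → V) : Prop :=
  3 ≤ n ∧ Function.Injective c ∧ ∀ i, G.Adj (c i) (c (i + 1))

/-- A longest cycle of `G`. -/
def IsLongestCycle (G : SimpleGraph V) (n : ℕ) (c : ZMod n → V) : Prop :=
  IsCycleOn G n c ∧ ∀ (m : ℕ) (d : ZMod m → V), IsCycleOn G m d → m ≤ n

/-- A dominating cycle: every edge of `G` is incident with a vertex of the cycle. -/
def DominatingCycle (G : SimpleGraph V) (n : ℕ) (c : ZMod n → V) : Prop :=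
  IsCycleOn G n c ∧ ∀ u v : V, G.Adj u v → u ∈ Set.range c ∨ v ∈ Set.range c

/-- `H` is (the vertex set of) a connected component of `G - R`. -/
def IsCompOff (G : SimpleGraph V) (R : Set V) (H : Set V) : Prop :=
  H.Nonempty ∧ Disjoint H R ∧ (G.induce H).Connected ∧
  ∀ u v : V, u ∈ H → v ∉ H → v ∉ R → ¬ G.Adj u v

/-- `μ`: the maximum order of a component of `G - R`. -/
noncomputable def muC (G : SimpleGraph V) (R : Set V) : ℕ :=
  sSup {k | ∃ H : Set V, IsCompOff G R H ∧ H.ncard = k}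

/-- `ω`: the number of components of `G - R` of maximum order. -/
noncomputable def omegaC (G : SimpleGraph V) (R : Set V) : ℕ :=
  {H : Set V | IsCompOff G R H ∧ H.ncard = muC G R}.ncard

/-- `G` is 2-connected: at least 3 vertices, connected, and removing any
vertex leaves it connected. -/
def TwoConnected (G : SimpleGraph V) : Prop :=
  3 ≤ Fintype.card V ∧ G.Connected ∧
  ∀ v : V, (G.induce ({v}ᶜ : Set V)).Connected

/-- The set of indices of `ZMod n` encountered going from `s` to `t` in the
positive direction (including both `s` and `t`). -/
def seg (n : ℕ) (s t : ZMod n) : Set (ZMod n) :=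
  {x | ∃ k : ℕ, x = s + (k : ZMod n) ∧ ∀ m : ℕ, m < k → s + (m : ZMod n) ≠ t}

/-- `G` is complete multipartite: the vertices partition into classes of an
equivalence relation which are independent, with all edges between classes. -/
def CompleteMultipartite (G : SimpleGraph V) : Prop :=
  ∃ r : V → V → Prop, Equivalence r ∧ ∀ u v : V, u ≠ v → (G.Adj u v ↔ ¬ r u v)

/-- A `C`-path (for `R = V(C)`): a path of order at least 2 whose ends lie in
`R` and whose internal vertices avoid `R`. -/
def IsCPath (G : SimpleGraph V) (R : Set V) (m : ℕ) (p : ℕ → V) : Prop :=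
  2 ≤ m ∧ IsPathOn G m p ∧ p 0 ∈ R ∧ p (m - 1) ∈ R ∧
  ∀ i, 0 < i → i < m - 1 → p i ∉ R

section Helpers

variable {V : Type*} [Fintype V] [DecidableEq V]

lemma splice_lemma (G : SimpleGraph V) {n : ℕ} {c : ZMod n → V} (hc : IsCycleOn G n c)
    (i : ZMod n) (k : ℕ) (hk : 1 ≤ k) (v : ℕ → V)
    (hvinj : ∀ a b, a < k → b < k → v a = v b → a = b)
    (hoff : ∀ j, j < k → ∀ t : ZMod n, t ≠ i + 1 → v j ≠ c t)
    (hstart : G.Adj (c i) (v 0))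
    (hchain : ∀ j, j + 1 < k → G.Adj (v j) (v (j + 1)))
    (hlast : G.Adj (v (k - 1)) (c (i + 2))) :
    ∃ d : ZMod (n - 1 + k) → V, IsCycleOn G (n - 1 + k) d ∧
      Set.range d = (v '' {j | j < k}) ∪ (Set.range c \ {c (i + 1)}) := by
  obtain ⟨hn, hcinj, hcadj⟩ := hc
  set m := n - 1 + k with hm
  haveI : NeZero m := ⟨by omega⟩
  haveI : NeZero n := ⟨by omega⟩
  have hmlt : 3 ≤ m := by omega
  have hcast : ∀ r : ℕ, r < n → ((r : ZMod n)).val = r := fun r hr => ZMod.val_cast_of_lt hr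
  have hne : ∀ r : ℕ, r < n - 1 → i + 2 + (r : ZMod n) ≠ i + 1 := by
    intro r hr h
    have h3 : ((r + 1 : ℕ) : ZMod n) = 0 := by push_cast; linear_combination h
    have := hcast (r+1) (by omega)
    rw [h3] at this
    simp [ZMod.val_zero] at this
  refine ⟨fun t => if t.val < k then v t.val else c (i + 2 + ((t.val - k : ℕ) : ZMod n)), ⟨hmlt, ?_, ?_⟩, ?_⟩
  · intro t s h
    have ht := ZMod.val_lt t
    have hs := ZMod.val_lt s
    by_cases h1 : t.val < k <;> by_cases h2 : s.val < k <;> simp only [h1, h2, if_pos, if_neg, if_true, if_false] at h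
    · exact ZMod.val_injective m (hvinj _ _ h1 h2 h)
    · exact absurd h (hoff _ h1 _ (hne _ (by omega)))
    · exact absurd h.symm (hoff _ h2 _ (hne _ (by omega)))
    · have := hcinj h
      have := add_left_cancel this
      have hval : ((t.val - k : ℕ) : ZMod n).val = ((s.val - k : ℕ) : ZMod n).val := by rw [this]
      rw [hcast _ (by omega), hcast _ (by omega)] at hval
      exact ZMod.val_injective m (by omega)
  · intro t
    have ht := ZMod.val_lt t
    haveI : Fact (1 < m) := ⟨by omega⟩
    have hone : ((1 : ZMod m)).val = 1 := ZMod.val_one m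
    have hadd : (t + 1).val = (t.val + 1) % m := by rw [ZMod.val_add, hone]
    by_cases hend : t.val + 1 = m
    · have h0 : (t + 1).val = 0 := by rw [hadd, hend, Nat.mod_self]
      have htv : ¬ t.val < k := by omega
      have he : ((t.val - k : ℕ) : ZMod n) = (-2 : ZMod n) := by
        have : t.val - k = n - 2 := by omega
        rw [this]
        have : ((n - 2 : ℕ) : ZMod n) = (n : ZMod n) - 2 := by
          push_cast [Nat.cast_sub (by omega : 2 ≤ n)]; ring
        rw [this, ZMod.natCast_self]; ring
      simp only [if_neg htv, h0, if_pos (show 0 < k by omega), he]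
      have : i + 2 + -2 = i := by ring
      rw [this]
      exact hstart
    · have hadd' : (t + 1).val = t.val + 1 := by rw [hadd, Nat.mod_eq_of_lt (by omega)]
      by_cases h1 : t.val + 1 < k
      · simp only [if_pos (by omega : t.val < k), hadd', if_pos h1]
        exact hchain _ h1
      · by_cases h2 : t.val + 1 = k
        · simp only [if_pos (by omega : t.val < k), hadd', h2, if_neg (lt_irrefl k)]
          have : ((k - k : ℕ) : ZMod n) = 0 := by simp
          rw [this, add_zero]
          have : t.val = k - 1 := by omega
          rw [this]
          exact hlast
        · have hkt : k ≤ t.val := by omega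
          simp only [if_neg (by omega : ¬ t.val < k), hadd', if_neg (by omega : ¬ t.val + 1 < k)]
          have : ((t.val + 1 - k : ℕ) : ZMod n) = ((t.val - k : ℕ) : ZMod n) + 1 := by
            have : t.val + 1 - k = (t.val - k) + 1 := by omega
            rw [this]; push_cast; ring
          rw [this, ← add_assoc]
          exact hcadj _
  · ext w
    constructor
    · rintro ⟨t, rfl⟩
      by_cases h1 : t.val < k
      · exact Or.inl ⟨t.val, h1, by simp [h1]⟩
      · refine Or.inr ?_
        simp only [if_neg h1, Set.mem_diff, Set.mem_range, Set.mem_singleton_iff]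
        refine ⟨⟨_, rfl⟩, fun h => ?_⟩
        exact hne _ (by have := ZMod.val_lt t; omega) (hcinj h)
    · rintro (⟨j, hj, rfl⟩ | ⟨⟨s, rfl⟩, hs⟩)
      · have hj' : j < k := hj
        refine ⟨(j : ZMod m), ?_⟩
        have hjv : ((j : ZMod m)).val = j := ZMod.val_cast_of_lt (by omega)
        simp [hjv, hj']
      · have hsne : s ≠ i + 1 := fun h => hs (by rw [h]; exact Set.mem_singleton _)
        set r := (s - i - 2).val with hr
        have hrlt : r < n := ZMod.val_lt _
        have hrne : r ≠ n - 1 := by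
          intro h
          apply hsne
          have : ((r : ℕ) : ZMod n) = s - i - 2 := ZMod.natCast_rightInverse _
          rw [h] at this
          have h2 : ((n - 1 : ℕ) : ZMod n) = -1 := by
            push_cast [Nat.cast_sub (by omega : 1 ≤ n)]
            rw [ZMod.natCast_self]; ring
          rw [h2] at this
          linear_combination -this
        refine ⟨((r + k : ℕ) : ZMod m), ?_⟩
        have hv : (((r + k : ℕ) : ZMod m)).val = r + k := ZMod.val_cast_of_lt (by omega)
        have hnk : ¬ (r + k < k) := by omega
        simp only [hv, hnk, if_neg, if_false]
        have : ((r + k - k : ℕ) : ZMod n) = (r : ZMod n) := by norm_num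
        rw [this]
        have : ((r : ℕ) : ZMod n) = s - i - 2 := ZMod.natCast_rightInverse _
        rw [this]
        congr 1
        ring

lemma walk_closure (G : SimpleGraph V) {S K : Set V} (hK : IsCompOff G S K)
    {u : V} (hu : u ∈ K) (P : V → Prop) (hPu : P u)
    (hstep : ∀ a b, a ∈ K → b ∈ K → P a → G.Adj a b → P b) :
    ∀ w ∈ K, P w := by
  intro w hw
  obtain ⟨-, -, hconn, -⟩ := hK
  obtain ⟨W⟩ := hconn.preconnected ⟨u, hu⟩ ⟨w, hw⟩
  have : ∀ (a b : ↥K) (W : (G.induce K).Walk a b), P a.1 → P b.1 := by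
    intro a b W
    induction W with
    | nil => exact id
    | cons h p ih =>
      intro ha
      exact ih (hstep _ _ (by exact Subtype.mem _) (by exact Subtype.mem _) ha h)
  exact this _ _ W hPu

lemma comp_eq (G : SimpleGraph V) {S A B : Set V} (hA : IsCompOff G S A)
    (hB : IsCompOff G S B) {u : V} (huA : u ∈ A) (huB : u ∈ B) : A = B := by
  have key : ∀ (A B : Set V), IsCompOff G S A → IsCompOff G S B → u ∈ A → u ∈ B → A ⊆ B := by
    intro A B hA hB huA huB w hw
    refine walk_closure G hA huA (· ∈ B) huB ?_ w hw
    intro a b haK hbK haB hadj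
    by_contra hbB
    exact hB.2.2.2 a b haB hbB (fun hbS => (hA.2.1).ne_of_mem hbK hbS rfl) hadj
  exact le_antisymm (key A B hA hB huA huB) (key B A hB hA huB huA)

lemma comp_exists (G : SimpleGraph V) (S : Set V) (u : V) (hu : u ∉ S) :
    ∃ A, IsCompOff G S A ∧ u ∈ A := by
  classical
  set T : Set V := Sᶜ with hT
  have huT : u ∈ T := hu
  set A : Set V := {w | ∃ hw : w ∈ T, (G.induce T).Reachable ⟨u, huT⟩ ⟨w, hw⟩} with hA
  have huA : u ∈ A := ⟨huT, Reachable.refl _⟩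
  have hsubT : A ⊆ T := fun w hw => hw.1
  have hreach : ∀ w (hw : w ∈ A), (G.induce T).Reachable ⟨u, huT⟩ ⟨w, hw.1⟩ := fun w hw => hw.2
  have hsupp : ∀ (b : ↥T) (W : (G.induce T).Walk ⟨u, huT⟩ b), ∀ w ∈ W.support, (w : V) ∈ A := by
    intro b W w hw
    exact ⟨w.2, ⟨(W.takeUntil w hw).copy rfl (Subtype.ext rfl)⟩⟩
  have htrans : ∀ (a b : ↥T) (W : (G.induce T).Walk a b) (_ : ∀ w ∈ W.support, (w : V) ∈ A)
      (ha : (a : V) ∈ A) (hb : (b : V) ∈ A),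
      (G.induce A).Reachable ⟨a, ha⟩ ⟨b, hb⟩ := by
    intro a b W
    induction W with
    | nil => intro _ ha hb; exact Reachable.refl _
    | @cons x y z h p ih =>
      intro hWs ha hb
      have hy : (y : V) ∈ A := hWs y (by simp [Walk.support_cons])
      have h1 : (G.induce A).Adj ⟨x, ha⟩ ⟨y, hy⟩ := h
      exact (h1.reachable).trans (ih (fun w hw => hWs w (by simp [Walk.support_cons, hw])) hy hb)
  refine ⟨A, ⟨⟨u, huA⟩, ?_, ?_, ?_⟩, huA⟩
  · exact Set.disjoint_left.mpr fun w hw => hw.1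
  · rw [connected_iff]
    refine ⟨?_, ⟨⟨u, huA⟩⟩⟩
    intro a b
    obtain ⟨Wa⟩ := hreach a.1 a.2
    obtain ⟨Wb⟩ := hreach b.1 b.2
    have r1 := htrans _ _ Wa (hsupp _ Wa) huA a.2
    have r2 := htrans _ _ Wb (hsupp _ Wb) huA b.2
    exact r1.symm.trans r2
  · intro a b ha hb hbS hadj
    have hbT : b ∈ T := hbS
    apply hb
    obtain ⟨haT, ⟨Wa⟩⟩ := ha
    have hab : (G.induce T).Adj ⟨a, haT⟩ ⟨b, hbT⟩ := hadj
    exact ⟨hbT, ⟨Wa.append hab.toWalk⟩⟩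

lemma path_in_comp (G : SimpleGraph V) {S H : Set V} (hH : IsCompOff G S H)
    {x z : V} (hx : x ∈ H) (hz : z ∈ H) :
    ∃ k, 1 ≤ k ∧ ∃ v : ℕ → V, v 0 = x ∧ v (k - 1) = z ∧ (∀ j, j < k → v j ∈ H) ∧
      (∀ a b, a < k → b < k → v a = v b → a = b) ∧
      (∀ j, j + 1 < k → G.Adj (v j) (v (j + 1))) := by
  classical
  obtain ⟨-, -, hconn, -⟩ := hH
  obtain ⟨W0⟩ := hconn.preconnected ⟨x, hx⟩ ⟨z, hz⟩
  set W := W0.toPath.1 with hW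
  have hWp : W.IsPath := W0.toPath.2
  set L : List V := W.support.map Subtype.val with hL
  have hLlen : L.length = W.length + 1 := by simp [hL, Walk.length_support]
  have hLnd : L.Nodup := (hWp.support_nodup).map Subtype.val_injective
  have hLchain : List.IsChain G.Adj L := by
    rw [hL, List.isChain_map]
    refine List.IsChain.imp ?_ W.isChain_adj_support
    intro a b hab
    exact hab
  have hLne : L ≠ [] := by
    rw [hL, Ne, List.map_eq_nil_iff]
    exact W.support_ne_nil
  refine ⟨L.length, by omega, fun j => L.getD j x, ?_, ?_, ?_, ?_, ?_⟩
  · rw [hL, Walk.support_eq_cons]; rfl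
  · show L.getD (L.length - 1) x = z
    have hpos : 0 < L.length := List.length_pos_iff.mpr hLne
    have h1 : L.getD (L.length - 1) x = L.getLast hLne :=
      (List.getD_eq_get _ _ ⟨_, by omega⟩).trans (List.getLast_eq_getElem _).symm
    rw [h1]
    show (List.map Subtype.val W.support).getLast hLne = z
    rw [List.getLast_map, Walk.getLast_support]
  · intro j hj
    show L.getD j x ∈ H
    rw [List.getD_eq_get _ _ ⟨j, hj⟩]
    have h0 : L.get ⟨j, hj⟩ ∈ L := List.get_mem _ _
    obtain ⟨w, -, hw⟩ := List.mem_map.mp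
      (show L.get ⟨j, hj⟩ ∈ List.map Subtype.val W.support from h0)
    rw [← hw]; exact w.2
  · intro a b ha hb h
    have h : L.getD a x = L.getD b x := h
    rw [List.getD_eq_get _ _ ⟨a, ha⟩, List.getD_eq_get _ _ ⟨b, hb⟩] at h
    have := (List.Nodup.get_inj_iff hLnd).mp h
    exact congrArg Fin.val this
  · intro j hj
    show G.Adj (L.getD j x) (L.getD (j+1) x)
    rw [List.getD_eq_get _ _ ⟨j, by omega⟩, List.getD_eq_get _ _ ⟨j+1, hj⟩]
    exact List.isChain_iff_getElem.mp hLchain j (by omega)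

end Helpers

theorem stmt_13 (G : SimpleGraph V) (hG : P5Free G)
    (hnd : ∀ (m : ℕ) (d : ZMod m → V), IsLongestCycle G m d → ¬ DominatingCycle G m d)
    (n : ℕ) (c : ZMod n → V) (hc : IsLongestCycle G n c)
    (hmin : ∀ (m : ℕ) (d : ZMod m → V), IsLongestCycle G m d →
      muC G (Set.range c) ≤ muC G (Set.range d) ∧
      (muC G (Set.range c) = muC G (Set.range d) →
        omegaC G (Set.range c) ≤ omegaC G (Set.range d)))
    (H : Set V) (hH : IsCompOff G (Set.range c) H)
    (hHmu : H.ncard = muC G (Set.range c)) (hH2 : 2 ≤ H.ncard) :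
    ∀ i : ZMod n, (∃ x ∈ H, G.Adj x (c i)) → ¬ ∃ x ∈ H, G.Adj x (c (i + 2)) := by
  classical
  intro i hi1 hi2
  obtain ⟨x0, hx0H, hx0⟩ := hi1
  obtain ⟨y0, hy0H, hy0⟩ := hi2
  obtain ⟨⟨hn, hcinj, hcadj⟩, hlong⟩ := hc
  have hcyc : IsCycleOn G n c := ⟨hn, hcinj, hcadj⟩
  haveI : NeZero n := ⟨by omega⟩
  haveI : Fact (1 < n) := ⟨by omega⟩
  have hHR : Disjoint H (Set.range c) := hH.2.1
  have hnotR : ∀ w, w ∈ H → w ∉ Set.range c := fun w hw => Set.disjoint_left.mp hHR hw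
  have hoffC : ∀ w, w ∈ H → ∀ t : ZMod n, w ≠ c t := by
    intro w hw t h
    exact hnotR w hw ⟨t, h.symm⟩
  have hi12 : i + 1 + 1 = i + 2 := by ring
  -- Step 1: uniqueness of the common neighbour
  have uniq : ∀ a b, a ∈ H → b ∈ H → G.Adj a (c i) → G.Adj b (c (i + 2)) → a = b := by
    intro a b ha hb hai hbi
    by_contra hab
    obtain ⟨k, hk1, v, hv0, hvl, hvH, hvinj, hvadj⟩ := path_in_comp G hH ha hb
    have hk2 : 2 ≤ k := by
      by_contra hcon
      have hk1' : k = 1 := by omega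
      subst hk1'
      exact hab (hv0.symm.trans hvl)
    obtain ⟨d, hd, -⟩ := splice_lemma G hcyc i k (by omega) v hvinj
      (fun j hj t _ => hoffC _ (hvH j hj) t) (by rw [hv0]; exact hai.symm) hvadj
      (by rw [hvl]; exact hbi)
    have := hlong _ _ hd
    omega
  have hxy : x0 = y0 := uniq _ _ hx0H hy0H hx0 hy0
  subst hxy
  -- Step 2: no vertex of H is adjacent to c (i+1)
  have step2 : ∀ z, z ∈ H → ¬ G.Adj z (c (i + 1)) := by
    intro z hz hadj
    obtain ⟨k, hk1, v, hv0, hvl, hvH, hvinj, hvadj⟩ := path_in_comp G hH hx0H hz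
    have e1 : ∀ a b, a < k + 1 → b < k + 1 → (if a < k then v a else c (i + 1)) = (if b < k then v b else c (i + 1)) → a = b := by
      intro a b ha hb h
      by_cases h1 : a < k <;> by_cases h2 : b < k <;>
        simp only [h1, h2, if_pos, if_neg, if_true, if_false] at h
      · exact hvinj _ _ h1 h2 h
      · exact absurd h (hoffC _ (hvH a h1) _)
      · exact absurd h.symm (hoffC _ (hvH b h2) _)
      · omega
    have e2 : ∀ j, j < k + 1 → ∀ t : ZMod n, t ≠ i + 1 → (if j < k then v j else c (i + 1)) ≠ c t := by
      intro j hj t ht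
      by_cases h1 : j < k
      · simp only [if_pos h1]; exact hoffC _ (hvH j h1) t
      · simp only [if_neg h1]; exact fun h => ht (hcinj h).symm
    have e3 : G.Adj (c i) (if 0 < k then v 0 else c (i + 1)) := by
      rw [if_pos (show 0 < k by omega), hv0]
      exact hx0.symm
    have e4 : ∀ j, j + 1 < k + 1 → G.Adj (if j < k then v j else c (i + 1)) (if j + 1 < k then v (j + 1) else c (i + 1)) := by
      intro j hj
      by_cases h1 : j + 1 < k
      · rw [if_pos (by omega : j < k), if_pos h1]; exact hvadj j h1
      · have hj1 : j + 1 = k := by omega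
        rw [if_pos (by omega : j < k), hj1, if_neg (lt_irrefl k)]
        have hjk : j = k - 1 := by omega
        rw [hjk, hvl]
        exact hadj
    have e5 : G.Adj (if k + 1 - 1 < k then v (k + 1 - 1) else c (i + 1)) (c (i + 2)) := by
      simp only [Nat.add_sub_cancel, if_neg (lt_irrefl k)]
      rw [← hi12]
      exact hcadj (i + 1)
    obtain ⟨d, hd, -⟩ := splice_lemma G hcyc i (k + 1) (by omega)
      (fun j => if j < k then v j else c (i + 1)) e1 e2 e3 e4 e5
    have := hlong _ _ hd
    omega
  -- Step 3: a neighbour x' of x0 inside H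
  obtain ⟨y1, hy1H, hy1ne⟩ := Set.exists_ne_of_one_lt_ncard (show 1 < H.ncard by omega) x0
  obtain ⟨k, hk1, v, hv0, hvl, hvH, hvinj, hvadj⟩ := path_in_comp G hH hx0H hy1H
  have hk2 : 2 ≤ k := by
    by_contra hcon
    have hk1' : k = 1 := by omega
    subst hk1'
    exact hy1ne (hvl.symm.trans hv0)
  set x' := v 1 with hx'def
  have hx'H : x' ∈ H := hvH 1 (by omega)
  have hx'adj : G.Adj x0 x' := by rw [← hv0]; exact hvadj 0 (by omega)
  have d1 : x' ≠ x0 := by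
    intro h
    have := hvinj 1 0 (by omega) (by omega) (by rw [hv0]; exact h)
    omega
  by_cases hzc : ∃ z, z ∉ Set.range c ∧ G.Adj (c (i + 1)) z
  · -- Case A : c(i+1) has a neighbour off C, leading to an induced P5
    obtain ⟨z, hzR, hzadj⟩ := hzc
    have hzH : z ∉ H := fun h => step2 z h hzadj.symm
    have hzRne : ∀ t : ZMod n, z ≠ c t := fun t h => hzR ⟨t, h.symm⟩
    have hznotci : ¬ G.Adj z (c i) := by
      intro hzi
      have e1 : ∀ a b, a < 2 → b < 2 →
          ((fun j => match j with | 0 => z | _ => c (i + 1)) a : V) =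
          ((fun j => match j with | 0 => z | _ => c (i + 1)) b : V) → a = b := by
        intro a b ha hb h
        interval_cases a <;> interval_cases b <;>
          first
            | rfl
            | (exact absurd h (hzRne (i + 1)))
            | (exact absurd h.symm (hzRne (i + 1)))
      have e2 : ∀ j, j < 2 → ∀ t : ZMod n, t ≠ i + 1 →
          ((fun j => match j with | 0 => z | _ => c (i + 1)) j : V) ≠ c t := by
        intro j hj t ht
        interval_cases j
        · exact hzRne t
        · exact fun h => ht (hcinj h).symm
      obtain ⟨d, hd, -⟩ := splice_lemma G hcyc i 2 (by omega)
        (fun j => match j with | 0 => z | _ => c (i + 1)) e1 e2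
        hzi.symm
        (by intro j hj
            have : j = 0 := by omega
            subst this
            exact hzadj.symm)
        (by rw [← hi12]; exact hcadj (i + 1))
      have := hlong _ _ hd
      omega
    -- facts for the P5
    have d2 : x' ≠ c i := hoffC _ hx'H i
    have d3 : x' ≠ c (i + 1) := hoffC _ hx'H (i + 1)
    have d4 : x' ≠ z := fun h => hzH (h ▸ hx'H)
    have d5 : x0 ≠ c i := hoffC _ hx0H i
    have d6 : x0 ≠ c (i + 1) := hoffC _ hx0H (i + 1)
    have d7 : x0 ≠ z := fun h => hzH (h ▸ hx0H)
    have d8 : c i ≠ c (i + 1) := by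
      intro h
      have h2 := hcinj h
      have h3 : (0 : ZMod n) = 1 := by linear_combination h2
      exact one_ne_zero h3.symm
    have d9 : c i ≠ z := fun h => (hzRne i) h.symm
    have d10 : c (i + 1) ≠ z := fun h => (hzRne (i + 1)) h.symm
    have n1 : ¬ G.Adj x' (c i) := fun h => d1 (uniq _ _ hx'H hx0H h hy0)
    have n2 : ¬ G.Adj x' (c (i + 1)) := step2 _ hx'H
    have n3 : ¬ G.Adj x' z := hH.2.2.2 x' z hx'H hzH hzR
    have n4 : ¬ G.Adj x0 (c (i + 1)) := step2 _ hx0H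
    have n5 : ¬ G.Adj x0 z := hH.2.2.2 x0 z hx0H hzH hzR
    have n6 : ¬ G.Adj (c i) z := fun h => hznotci h.symm
    apply hG
    refine ⟨fun j => match j with
      | 0 => x' | 1 => x0 | 2 => c i | 3 => c (i + 1) | _ => z, ⟨?_, ?_⟩, ?_⟩
    · intro a b ha hb h
      interval_cases a <;> interval_cases b <;>
        first
          | rfl
          | (exact absurd h d1) | (exact absurd h.symm d1)
          | (exact absurd h d2) | (exact absurd h.symm d2)
          | (exact absurd h d3) | (exact absurd h.symm d3)
          | (exact absurd h d4) | (exact absurd h.symm d4)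
          | (exact absurd h d5) | (exact absurd h.symm d5)
          | (exact absurd h d6) | (exact absurd h.symm d6)
          | (exact absurd h d7) | (exact absurd h.symm d7)
          | (exact absurd h d8) | (exact absurd h.symm d8)
          | (exact absurd h d9) | (exact absurd h.symm d9)
          | (exact absurd h d10) | (exact absurd h.symm d10)
    · intro j hj
      have hj' : j < 4 := by omega
      interval_cases j
      · exact hx'adj.symm
      · exact hx0
      · exact hcadj i
      · exact hzadj
    · intro a b ha hb hadj
      interval_cases a <;> interval_cases b <;>
        first
          | omega
          | (exact absurd hadj G.irrefl)
          | (exact absurd hadj n1) | (exact absurd hadj.symm n1)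
          | (exact absurd hadj n2) | (exact absurd hadj.symm n2)
          | (exact absurd hadj n3) | (exact absurd hadj.symm n3)
          | (exact absurd hadj n4) | (exact absurd hadj.symm n4)
          | (exact absurd hadj n5) | (exact absurd hadj.symm n5)
          | (exact absurd hadj n6) | (exact absurd hadj.symm n6)
  · -- Case B : c(i+1) has no neighbour off C; exchange x0 for c(i+1) on the cycle
    push_neg at hzc
    obtain ⟨d, hdcyc, hdrange⟩ := splice_lemma G hcyc i 1 le_rfl (fun _ => x0)
      (fun a b ha hb _ => by omega) (fun j hj t _ => hoffC _ hx0H t)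
      hx0.symm (fun j hj => absurd hj (by omega)) hy0
    have hdlong : IsLongestCycle G (n - 1 + 1) d :=
      ⟨hdcyc, fun m' d' h => le_trans (hlong m' d' h) (by omega)⟩
    obtain ⟨hmu_le, homega⟩ := hmin _ _ hdlong
    have himg : ((fun _ : ℕ => x0) '' {j | j < 1}) = {x0} := by
      ext w
      constructor
      · rintro ⟨j, -, rfl⟩; rfl
      · rintro rfl; exact ⟨0, by norm_num, rfl⟩
    have hR' : Set.range d = insert x0 (Set.range c \ {c (i + 1)}) := by
      rw [hdrange, himg, Set.singleton_union]
    have hx0R' : x0 ∈ Set.range d := by rw [hR']; exact Set.mem_insert _ _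
    have hsubR' : ∀ w, w ∈ Set.range c → w ≠ c (i + 1) → w ∈ Set.range d := by
      intro w hw hwne
      rw [hR']
      exact Set.mem_insert_iff.mpr (Or.inr ⟨hw, hwne⟩)
    have hbdd : ∀ (S A : Set V), IsCompOff G S A → A.ncard ≤ muC G S := by
      intro S A hA
      refine le_csSup ⟨Fintype.card V, ?_⟩ ⟨A, hA, rfl⟩
      rintro k' ⟨B, -, rfl⟩
      have := Set.ncard_le_ncard (Set.subset_univ B) Set.finite_univ
      simpa [Set.ncard_univ] using this
    have hμ2 : 2 ≤ muC G (Set.range c) := hHmu ▸ hH2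
    -- old components other than H survive
    have hold : ∀ A, IsCompOff G (Set.range c) A → A ≠ H → IsCompOff G (Set.range d) A := by
      intro A hA hAH
      have hAR : Disjoint A (Set.range c) := hA.2.1
      refine ⟨hA.1, ?_, hA.2.2.1, ?_⟩
      · rw [Set.disjoint_right]
        intro w hw
        rw [hR'] at hw
        rcases Set.mem_insert_iff.mp hw with rfl | ⟨hwR, -⟩
        · exact fun hx0A => hAH (comp_eq G hA hH hx0A hx0H)
        · exact Set.disjoint_right.mp hAR hwR
      · intro u v' hu hv hvR' hadj
        by_cases hvR : v' ∈ Set.range c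
        · have hvne : v' = c (i + 1) := by
            by_contra hne
            exact hvR' (hsubR' v' hvR hne)
          exact hzc u (Set.disjoint_left.mp hAR hu) (hvne ▸ hadj.symm)
        · exact hA.2.2.2 u v' hu hv hvR hadj
    -- every new component is small, or an old component other than H
    have hnew : ∀ K, IsCompOff G (Set.range d) K →
        K.ncard ≤ muC G (Set.range c) ∧
        (K.ncard = muC G (Set.range c) → IsCompOff G (Set.range c) K ∧ K ≠ H) := by
      intro K hK
      obtain ⟨u, hu⟩ := hK.1
      have huR' : u ∉ Set.range d := Set.disjoint_left.mp hK.2.1 hu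
      by_cases hu1 : u = c (i + 1)
      · have hKu : ∀ w ∈ K, w = u := by
          refine walk_closure G hK hu (· = u) rfl ?_
          intro a b haK hbK hab hadj
          exfalso
          subst hab
          have hbne : b ≠ c (i + 1) := fun h => hadj.ne (hu1.trans h.symm)
          have hbR' : b ∉ Set.range d := Set.disjoint_left.mp hK.2.1 hbK
          have hbR : b ∉ Set.range c := fun h => hbR' (hsubR' b h hbne)
          exact hzc b hbR (hu1 ▸ hadj)
        have hK1 : K = {u} := Set.eq_singleton_iff_unique_mem.mpr ⟨hu, hKu⟩
        rw [hK1, Set.ncard_singleton]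
        refine ⟨by omega, fun h => ?_⟩
        exfalso
        omega
      · have huR : u ∉ Set.range c := fun h => huR' (hsubR' u h hu1)
        obtain ⟨A, hA, huA⟩ := comp_exists G (Set.range c) u huR
        by_cases hAH : A = H
        · have huH : u ∈ H := hAH ▸ huA
          have hux : u ≠ x0 := fun h => huR' (h ▸ hx0R')
          have hsub : K ⊆ H \ {x0} := by
            intro w hw
            refine walk_closure G hK hu (· ∈ H \ {x0}) ⟨huH, hux⟩ ?_ w hw
            intro a b haK hbK haH hadj
            have hbR' : b ∉ Set.range d := Set.disjoint_left.mp hK.2.1 hbK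
            have hbx : b ≠ x0 := fun h => hbR' (h ▸ hx0R')
            have hbi1 : b ≠ c (i + 1) := by
              rintro rfl
              exact hzc a (hnotR a haH.1) hadj.symm
            have hbR : b ∉ Set.range c := fun h => hbR' (hsubR' b h hbi1)
            have hbH : b ∈ H := by
              by_contra hbH
              exact hH.2.2.2 a b haH.1 hbH hbR hadj
            exact ⟨hbH, hbx⟩
          have hcard : K.ncard ≤ muC G (Set.range c) - 1 := by
            calc K.ncard ≤ (H \ {x0}).ncard := Set.ncard_le_ncard hsub (Set.toFinite _)
              _ = H.ncard - 1 := Set.ncard_diff_singleton_of_mem hx0H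
              _ = muC G (Set.range c) - 1 := by rw [hHmu]
          refine ⟨by omega, fun h => ?_⟩
          exfalso
          omega
        · have hA' := hold A hA hAH
          have hKA : K = A := comp_eq G hK hA' hu huA
          rw [hKA]
          exact ⟨hbdd _ A hA, fun _ => ⟨hA, hAH⟩⟩
    have hmu' : muC G (Set.range d) = muC G (Set.range c) := by
      have h1 : muC G (Set.range d) ≤ muC G (Set.range c) := by
        apply csSup_le'
        rintro k' ⟨K, hK, rfl⟩
        exact (hnew K hK).1
      omega
    have hset : {K : Set V | IsCompOff G (Set.range d) K ∧ K.ncard = muC G (Set.range d)} =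
        {A : Set V | IsCompOff G (Set.range c) A ∧ A.ncard = muC G (Set.range c)} \ {H} := by
      ext K
      simp only [Set.mem_setOf_eq, Set.mem_diff, Set.mem_singleton_iff, hmu']
      constructor
      · rintro ⟨hK, hKμ⟩
        obtain ⟨h1, h2⟩ := (hnew K hK).2 hKμ
        exact ⟨⟨h1, hKμ⟩, h2⟩
      · rintro ⟨⟨hK, hKμ⟩, hKH⟩
        exact ⟨hold K hK hKH, hKμ⟩
    have hHin : H ∈ {A : Set V | IsCompOff G (Set.range c) A ∧ A.ncard = muC G (Set.range c)} :=
      ⟨hH, hHmu⟩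
    have homega' : omegaC G (Set.range d) = omegaC G (Set.range c) - 1 := by
      show ({K : Set V | IsCompOff G (Set.range d) K ∧ K.ncard = muC G (Set.range d)}).ncard = _
      rw [hset, Set.ncard_diff_singleton_of_mem hHin]
      rfl
    have homegapos : 1 ≤ omegaC G (Set.range c) := by
      show 1 ≤ ({A : Set V | IsCompOff G (Set.range c) A ∧ A.ncard = muC G (Set.range c)}).ncard
      exact (Set.ncard_pos (Set.toFinite _)).mpr ⟨H, hHin⟩
    have hfin := homega hmu'.symm
    omega
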